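/- arXiv:2405.11728 — 2 statements merged into one kernel-verified Lean document; each statement's English description precedes it below -/
import Mathlib

section
/- Let F ∈ F_ord(n) and let i_1 < i_2 < ⋯ < i_m be vertices of F (identified with their preorder traversal labels). Then in the lattice (F_ord(n), ≤), the meet F ∧ F[i_1] ∧ F[i_2] ∧ ⋯ ∧ F[i_m] equals the forest (⋯((F[i_1])[i_2])⋯)[i_m] obtained by operating on i_1 in F, then on i_2 in the result, and so on through i_m. -/
open scoped Classical

noncomputable section

/-- An ordered forest on `n` vertices, with vertices identified with their labels `1, …, n`
under left-to-right preorder traversal, encoded by its parent function: `par i` is the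
parent of vertex `i` (and `par i = 0` when `i` is a root).  The condition `nested` says
exactly that the function arises from the preorder traversal labeling of an ordered forest:
the vertices strictly between `par i` and `i` all lie in the subtree interval below `par i`.
Values outside `[1, n]` are normalized to `0`, so that two ordered forests are equal iff
their parent functions are equal. -/
structure OForest (n : ℕ) where
  par : ℕ → ℕ
  par_lt : ∀ i, 1 ≤ i → i ≤ n → par i < i
  nested : ∀ i k, 1 ≤ i → i ≤ n → par i < k → k < i → par i ≤ par k
  par_out : ∀ i, i = 0 ∨ n < i → par i = 0

/-- Auxiliary construction for the operation on a non-leaf vertex `v`: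
the rightmost child `v'` of `v` is reattached to the parent of `v`. -/
def OForest.mkOp {n : ℕ} (F : OForest n) (v : ℕ) (hv : 1 ≤ v)
    (hne : ((Finset.Icc 1 n).filter fun i => F.par i = v).Nonempty) : OForest n where
  par i := if i = ((Finset.Icc 1 n).filter fun i => F.par i = v).max' hne then F.par v
           else F.par i
  par_lt := by
    set v' := ((Finset.Icc 1 n).filter fun i => F.par i = v).max' hne with hv'def
    have hmem := Finset.max'_mem _ hne
    rw [← hv'def] at hmem
    simp only [Finset.mem_filter, Finset.mem_Icc] at hmem
    obtain ⟨⟨hv'1, hv'n⟩, hpar⟩ := hmem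
    have hvlt : v < v' := hpar ▸ F.par_lt v' hv'1 hv'n
    have hvn : v ≤ n := le_trans hvlt.le hv'n
    have hpv : F.par v < v := F.par_lt v hv hvn
    intro i h1 h2
    try dsimp only
    by_cases hi : i = v'
    · subst hi; rw [if_pos rfl]; omega
    · rw [if_neg hi]; exact F.par_lt i h1 h2
  nested := by
    set v' := ((Finset.Icc 1 n).filter fun i => F.par i = v).max' hne with hv'def
    have hmem := Finset.max'_mem _ hne
    rw [← hv'def] at hmem
    simp only [Finset.mem_filter, Finset.mem_Icc] at hmem
    obtain ⟨⟨hv'1, hv'n⟩, hpar⟩ := hmem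
    have hvlt : v < v' := hpar ▸ F.par_lt v' hv'1 hv'n
    have hvn : v ≤ n := le_trans hvlt.le hv'n
    have hpv : F.par v < v := F.par_lt v hv hvn
    intro i k h1 h2 h3 h4
    try dsimp only at h3 ⊢
    by_cases hi : i = v'
    · subst hi
      rw [if_pos rfl] at h3 ⊢
      rw [if_neg (by omega : ¬ k = v')]
      by_cases hkv : k = v
      · subst hkv; exact le_refl _
      · by_cases hk2 : k < v
        · exact F.nested v k hv hvn h3 hk2
        · have hvk : v < k := by omega
          have hnk := F.nested v' k hv'1 hv'n (by rw [hpar]; exact hvk) h4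
          rw [hpar] at hnk
          omega
    · rw [if_neg hi] at h3 ⊢
      by_cases hk : k = v'
      · subst hk
        rw [if_pos rfl]
        have h5 : F.par i ≤ v := by
          have hni := F.nested i v' h1 h2 h3 h4
          rw [hpar] at hni; exact hni
        rcases lt_or_eq_of_le h5 with h6 | h6
        · exact F.nested i v h1 h2 h6 (by omega)
        · exfalso
          have hiC : i ∈ (Finset.Icc 1 n).filter fun j => F.par j = v :=
            Finset.mem_filter.2 ⟨Finset.mem_Icc.2 ⟨h1, h2⟩, h6⟩
          have := Finset.le_max' _ i hiC
          omega
      · rw [if_neg hk]; exact F.nested i k h1 h2 h3 h4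
  par_out := by
    set v' := ((Finset.Icc 1 n).filter fun i => F.par i = v).max' hne with hv'def
    have hmem := Finset.max'_mem _ hne
    rw [← hv'def] at hmem
    simp only [Finset.mem_filter, Finset.mem_Icc] at hmem
    obtain ⟨⟨hv'1, hv'n⟩, hpar⟩ := hmem
    intro i hi
    try dsimp only
    by_cases h' : i = v'
    · subst h'; exact absurd hi (by omega)
    · rw [if_neg h']; exact F.par_out i hi

/-- The operation on vertex `v` of `F`. -/
def OForest.op {n : ℕ} (F : OForest n) (v : ℕ) : OForest n :=
  if h : 1 ≤ v ∧ ((Finset.Icc 1 n).filter fun i => F.par i = v).Nonempty then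
    F.mkOp v h.1 h.2
  else F

/-- Vertex `v` is a non-leaf vertex of `F`: it is a vertex in `[1, n]` having a child. -/
def OForest.NonLeaf {n : ℕ} (F : OForest n) (v : ℕ) : Prop :=
  1 ≤ v ∧ v ≤ n ∧ ∃ i, 1 ≤ i ∧ i ≤ n ∧ F.par i = v

/-- The covering relation on ordered forests: `F` covers `G` iff `G = F.op v` for a
non-leaf vertex `v` of `F`. -/
def OForest.CovRel {n : ℕ} (F G : OForest n) : Prop :=
  ∃ v, F.NonLeaf v ∧ G = F.op v

/-- The partial order on ordered forests on `n` vertices: the reflexive-transitive closure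
of the relations `F ≥ F.op v` over non-leaf vertices `v`. -/
def OForest.le {n : ℕ} (G F : OForest n) : Prop :=
  Relation.ReflTransGen (fun A B : OForest n => A.CovRel B) F G

/-- The path tree: the maximal element of the Tamari lattice, in which vertex `t + 1` is the
unique child of vertex `t` for each `t < n`. -/
def pathForest (n : ℕ) : OForest n where
  par i := if 1 ≤ i ∧ i ≤ n then i - 1 else 0
  par_lt := by intro i h1 h2; simp only [if_pos (And.intro h1 h2)]; omega
  nested := by
    intro i k h1 h2 h3 h4
    try dsimp only at h3 ⊢
    rw [if_pos (And.intro h1 h2)] at h3 ⊢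
    split <;> omega
  par_out := by intro i h; (try dsimp only); split <;> omega



namespace OForest

variable {n : ℕ}

/-- The set of children of `v`. -/
def chSet (F : OForest n) (v : ℕ) : Finset ℕ := (Finset.Icc 1 n).filter fun i => F.par i = v

lemma mem_chSet {F : OForest n} {v k : ℕ} :
    k ∈ F.chSet v ↔ (1 ≤ k ∧ k ≤ n) ∧ F.par k = v := by
  simp [chSet, Finset.mem_Icc]

lemma max'_congr {s t : Finset ℕ} (h : s = t) (hs : s.Nonempty) (ht : t.Nonempty) :
    s.max' hs = t.max' ht := by subst h; rfl

/-- The property defining the end of the subtree interval of `i`. -/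
def evP (F : OForest n) (i m : ℕ) : Prop :=
  i ≤ m ∧ m ≤ n ∧ ∀ k, i < k → k ≤ m → i ≤ F.par k

/-- The largest label in the subtree of `i` (the "bracket vector"). -/
def ev (F : OForest n) (i : ℕ) : ℕ := Nat.findGreatest (F.evP i) n

lemma evP_self (F : OForest n) {i : ℕ} (h : i ≤ n) : F.evP i i :=
  ⟨le_refl i, h, fun _ h1 h2 => absurd (lt_of_lt_of_le h1 h2) (lt_irrefl i)⟩

lemma ev_le (F : OForest n) (i : ℕ) : F.ev i ≤ n := Nat.findGreatest_le n

lemma le_ev (F : OForest n) {i : ℕ} (h : i ≤ n) : i ≤ F.ev i :=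
  Nat.le_findGreatest h (F.evP_self h)

lemma ev_spec (F : OForest n) {i : ℕ} (h : i ≤ n) : F.evP i (F.ev i) :=
  Nat.findGreatest_spec h (F.evP_self h)

lemma ev_par (F : OForest n) {i k : ℕ} (h : i ≤ n) (h1 : i < k) (h2 : k ≤ F.ev i) :
    i ≤ F.par k := (F.ev_spec h).2.2 k h1 h2

lemma le_ev_of (F : OForest n) {i m : ℕ} (h : F.evP i m) : m ≤ F.ev i :=
  Nat.le_findGreatest h.2.1 h

lemma ev_not_evP (F : OForest n) {i m : ℕ} (h1 : F.ev i < m) (h2 : m ≤ n) : ¬ F.evP i m :=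
  Nat.findGreatest_is_greatest h1 h2

lemma ev_succ (F : OForest n) {i : ℕ} (h1 : 1 ≤ i) (h2 : i ≤ n) (h3 : F.ev i < n) :
    F.par (F.ev i + 1) < i := by
  by_contra hc
  push_neg at hc
  have hP : F.evP i (F.ev i + 1) := by
    refine ⟨?_, by omega, fun k hk1 hk2 => ?_⟩
    · have := F.le_ev h2; omega
    · rcases Nat.lt_or_ge k (F.ev i + 1) with h | h
      · exact F.ev_par h2 hk1 (by omega)
      · have hk : k = F.ev i + 1 := by omega
        rw [hk]; exact hc
  exact ev_not_evP F (Nat.lt_succ_self _) (by omega) hP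

lemma ev_nested (F : OForest n) {i j : ℕ} (h1 : 1 ≤ i) (hij : i ≤ j) (hj : j ≤ F.ev i) :
    F.ev j ≤ F.ev i := by
  by_contra hc
  push_neg at hc
  have hin : i ≤ n := le_trans (le_trans hij hj) (F.ev_le i)
  have hjn : j ≤ n := le_trans hj (F.ev_le i)
  have hevn : F.ev i < n := lt_of_lt_of_le hc (F.ev_le j)
  have h4 := F.ev_succ h1 hin hevn
  have h5 : j ≤ F.par (F.ev i + 1) := F.ev_par hjn (by omega) (by omega)
  omega

lemma child_le_ev (F : OForest n) {i k : ℕ} (h1 : 1 ≤ k) (h2 : k ≤ n) (h3 : F.par i ≠ i)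
    (hp : F.par k = i) : k ≤ F.ev i := by
  have hik : i < k := hp ▸ F.par_lt k h1 h2
  refine F.le_ev_of ⟨le_of_lt hik, h2, fun j hj1 hj2 => ?_⟩
  rcases eq_or_lt_of_le hj2 with h | h
  · rw [h, hp]
  · have := F.nested k j h1 h2 (by rw [hp]; exact hj1) h
    omega

lemma ev_par_ge (F : OForest n) {i : ℕ} (h1 : 1 ≤ i) (h2 : i ≤ n) :
    1 ≤ F.par i → i ≤ F.ev (F.par i) := by
  intro hp
  have hpi : F.par i < i := F.par_lt i h1 h2
  refine F.le_ev_of ⟨le_of_lt hpi, h2, fun k hk1 hk2 => ?_⟩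
  rcases eq_or_lt_of_le hk2 with h | h
  · rw [h]
  · exact F.nested i k h1 h2 hk1 h

lemma eq_of_ev_eq {F G : OForest n} (h : ∀ j, 1 ≤ j → j ≤ n → F.ev j = G.ev j) : F = G := by
  have key : ∀ (A B : OForest n), (∀ j, 1 ≤ j → j ≤ n → A.ev j = B.ev j) →
      ∀ i, 1 ≤ i → i ≤ n → A.par i ≤ B.par i := by
    intro A B hAB i h1 h2
    by_cases hp : 1 ≤ A.par i
    · have hplt : A.par i < i := A.par_lt i h1 h2
      have hpn : A.par i ≤ n := by omega
      have hev : i ≤ A.ev (A.par i) := A.ev_par_ge h1 h2 hp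
      rw [hAB _ hp hpn] at hev
      exact B.ev_par hpn hplt hev
    · omega
  have hpar : F.par = G.par := by
    funext i
    rcases Nat.lt_or_ge i 1 with h1 | h1
    · rw [F.par_out i (Or.inl (by omega)), G.par_out i (Or.inl (by omega))]
    rcases Nat.lt_or_ge n i with h2 | h2
    · rw [F.par_out i (Or.inr h2), G.par_out i (Or.inr h2)]
    exact le_antisymm (key F G h i h1 h2)
      (key G F (fun j hj1 hj2 => (h j hj1 hj2).symm) i h1 h2)
  cases F; cases G; simpa using hpar

lemma op_eq_self {F : OForest n} {v : ℕ} (h : ¬(1 ≤ v ∧ (F.chSet v).Nonempty)) :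
    F.op v = F := dif_neg h

lemma op_pos {F : OForest n} {v : ℕ} (h : 1 ≤ v ∧ (F.chSet v).Nonempty) :
    F.op v = F.mkOp v h.1 h.2 := dif_pos h

lemma mkOp_par (F : OForest n) (v : ℕ) (hv : 1 ≤ v) (hne : (F.chSet v).Nonempty) (i : ℕ) :
    (F.mkOp v hv hne).par i = if i = (F.chSet v).max' hne then F.par v else F.par i := rfl

/-- Basic facts about the rightmost child. -/
lemma max'_facts (F : OForest n) {v : ℕ} (hv : 1 ≤ v) (hne : (F.chSet v).Nonempty) :
    1 ≤ (F.chSet v).max' hne ∧ (F.chSet v).max' hne ≤ n ∧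
    F.par ((F.chSet v).max' hne) = v ∧ v < (F.chSet v).max' hne ∧ v ≤ n := by
  set m := (F.chSet v).max' hne with hm
  have hmem := Finset.max'_mem _ hne
  rw [← hm] at hmem
  simp only [chSet, Finset.mem_filter, Finset.mem_Icc] at hmem
  obtain ⟨⟨ha, hb⟩, hc⟩ := hmem
  have hlt : v < m := by have := F.par_lt m ha hb; omega
  exact ⟨ha, hb, hc, hlt, by omega⟩

lemma ev_op_ne (F : OForest n) (v : ℕ) {i : ℕ} (h1 : 1 ≤ i) (h2 : i ≤ n) (hiv : i ≠ v) :
    (F.op v).ev i = F.ev i := by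
  by_cases h : 1 ≤ v ∧ (F.chSet v).Nonempty
  · rw [op_pos h]
    obtain ⟨ha, hb, hc, hd, he⟩ := F.max'_facts h.1 h.2
    set v' := (F.chSet v).max' h.2 with hv'
    set G := F.mkOp v h.1 h.2 with hG
    have hGpar : ∀ k, G.par k = if k = v' then F.par v else F.par k := fun k => rfl
    have hpv : F.par v < v := F.par_lt v h.1 he
    apply le_antisymm
    · obtain ⟨p1, p2, p3⟩ := G.ev_spec h2
      refine F.le_ev_of ⟨p1, p2, fun k hk1 hk2 => ?_⟩
      have hGk := p3 k hk1 hk2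
      rw [hGpar] at hGk
      by_cases hk : k = v'
      · rw [if_pos hk] at hGk
        rw [hk, hc]
        omega
      · rwa [if_neg hk] at hGk
    · obtain ⟨p1, p2, p3⟩ := F.ev_spec h2
      refine G.le_ev_of ⟨p1, p2, fun k hk1 hk2 => ?_⟩
      rw [hGpar]
      by_cases hk : k = v'
      · rw [if_pos hk]
        have hiv' : i ≤ F.par k := p3 k hk1 hk2
        rw [hk, hc] at hiv'
        exact p3 v (by omega) (by omega)
      · rw [if_neg hk]; exact p3 k hk1 hk2
  · rw [op_eq_self h]

lemma ev_op_self (F : OForest n) {v : ℕ} (h : 1 ≤ v ∧ (F.chSet v).Nonempty) :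
    (F.op v).ev v = (F.chSet v).max' h.2 - 1 := by
  rw [op_pos h]
  obtain ⟨ha, hb, hc, hd, he⟩ := F.max'_facts h.1 h.2
  set v' := (F.chSet v).max' h.2 with hv'
  set G := F.mkOp v h.1 h.2 with hG
  have hGpar : ∀ k, G.par k = if k = v' then F.par v else F.par k := fun k => rfl
  have hpv : F.par v < v := F.par_lt v h.1 he
  have hv'ev : v' ≤ F.ev v := F.child_le_ev ha hb (by omega) hc
  apply le_antisymm
  · by_contra hcon
    push_neg at hcon
    have hsp := G.ev_spec he
    have := hsp.2.2 v' hd (by omega)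
    rw [hGpar, if_pos rfl] at this
    omega
  · refine G.le_ev_of ⟨by omega, by omega, fun k hk1 hk2 => ?_⟩
    rw [hGpar, if_neg (by omega)]
    exact F.ev_par he hk1 (by omega)

lemma ev_op_le (F : OForest n) (v : ℕ) {i : ℕ} (h1 : 1 ≤ i) (h2 : i ≤ n) :
    (F.op v).ev i ≤ F.ev i := by
  by_cases hiv : i = v
  · subst hiv
    by_cases h : 1 ≤ i ∧ (F.chSet i).Nonempty
    · rw [F.ev_op_self h]
      obtain ⟨ha, hb, hc, hd, he⟩ := F.max'_facts h.1 h.2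
      have := F.child_le_ev ha hb (by have := F.par_lt i h.1 he; omega) hc
      omega
    · rw [op_eq_self h]
  · rw [F.ev_op_ne v h1 h2 hiv]

lemma ev_mono_of_le {F G : OForest n} (h : G.le F) :
    ∀ i, 1 ≤ i → i ≤ n → G.ev i ≤ F.ev i := by
  induction h with
  | refl => exact fun i _ _ => le_refl _
  | tail _ hbc ih =>
    intro i hi1 hi2
    obtain ⟨v, _, rfl⟩ := hbc
    exact le_trans (ev_op_le _ v hi1 hi2) (ih i hi1 hi2)

lemma le_of_ev_le (G : OForest n) : ∀ (d : ℕ) (F : OForest n),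
    (∑ i ∈ Finset.Icc 1 n, (F.ev i - G.ev i)) ≤ d →
    (∀ i, 1 ≤ i → i ≤ n → G.ev i ≤ F.ev i) → G.le F := by
  intro d
  induction d with
  | zero =>
    intro F hsum hle
    have heq : ∀ j, 1 ≤ j → j ≤ n → F.ev j = G.ev j := by
      intro j hj1 hj2
      have hz : F.ev j - G.ev j = 0 := by
        have := Finset.sum_eq_zero_iff.mp (Nat.le_zero.mp hsum) j
          (Finset.mem_Icc.mpr ⟨hj1, hj2⟩)
        exact this
      have := hle j hj1 hj2
      omega
    rw [eq_of_ev_eq heq]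
    exact Relation.ReflTransGen.refl
  | succ d ih =>
    intro F hsum hle
    by_cases hall : ∀ j, 1 ≤ j → j ≤ n → F.ev j = G.ev j
    · rw [eq_of_ev_eq hall]
      exact Relation.ReflTransGen.refl
    · push_neg at hall
      obtain ⟨w, hw1, hw2, hw3⟩ := hall
      obtain ⟨v, hv1, hvn, hvlt, hvμ, hvmax⟩ :
          ∃ v, 1 ≤ v ∧ v ≤ n ∧ G.ev v < F.ev v ∧
            (∀ u, 1 ≤ u → u ≤ n → G.ev u < F.ev u → F.ev v ≤ F.ev u) ∧
            (∀ u, 1 ≤ u → u ≤ n → G.ev u < F.ev u → F.ev u = F.ev v → u ≤ v) := by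
        set S := (Finset.Icc 1 n).filter (fun u => G.ev u < F.ev u) with hS
        have hSne : S.Nonempty := ⟨w, by
          simp only [hS, Finset.mem_filter, Finset.mem_Icc]
          exact ⟨⟨hw1, hw2⟩, lt_of_le_of_ne (hle w hw1 hw2) (fun hh => hw3 hh.symm)⟩⟩
        set μ := (S.image F.ev).min' (hSne.image _) with hμ
        set T := S.filter (fun u => F.ev u = μ) with hT
        have hTne : T.Nonempty := by
          obtain ⟨u, hu1, hu2⟩ := Finset.mem_image.mp ((S.image F.ev).min'_mem (hSne.image _))
          exact ⟨u, Finset.mem_filter.mpr ⟨hu1, hu2⟩⟩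
        obtain ⟨v, hvT, hvmax⟩ : ∃ v, v ∈ T ∧ ∀ u ∈ T, u ≤ v :=
          ⟨T.max' hTne, T.max'_mem hTne, fun u hu => Finset.le_max' T u hu⟩
        simp only [hT, hS, Finset.mem_filter, Finset.mem_Icc] at hvT
        obtain ⟨⟨⟨a1, a2⟩, a3⟩, a4⟩ := hvT
        refine ⟨v, a1, a2, a3, ?_, ?_⟩
        · intro u u1 u2 u3
          rw [a4, hμ]
          refine Finset.min'_le _ _ (Finset.mem_image_of_mem _ ?_)
          simp only [hS, Finset.mem_filter, Finset.mem_Icc]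
          exact ⟨⟨u1, u2⟩, u3⟩
        · intro u u1 u2 u3 u4
          refine hvmax u ?_
          simp only [hT, hS, Finset.mem_filter, Finset.mem_Icc]
          exact ⟨⟨⟨u1, u2⟩, u3⟩, by rw [u4, a4]⟩
      have hvev : v < F.ev v := lt_of_le_of_lt (G.le_ev hvn) hvlt
      have hevn : F.ev v ≤ n := F.ev_le v
      have hchild : F.par (v + 1) = v := by
        have h1 : v ≤ F.par (v + 1) := F.ev_par hvn (by omega) (by omega)
        have h2 : F.par (v + 1) < v + 1 := F.par_lt (v + 1) (by omega) (by omega)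
        omega
      have hne : (F.chSet v).Nonempty := by
        refine ⟨v + 1, ?_⟩
        simp only [chSet, Finset.mem_filter, Finset.mem_Icc]
        exact ⟨⟨by omega, by omega⟩, hchild⟩
      have hcond : 1 ≤ v ∧ (F.chSet v).Nonempty := ⟨hv1, hne⟩
      obtain ⟨v', hv'eq⟩ : ∃ v', v' = (F.chSet v).max' hne := ⟨_, rfl⟩
      obtain ⟨ha, hb, hc, hd, he⟩ := F.max'_facts hv1 hne
      rw [← hv'eq] at ha hb hc hd
      have hpv : F.par v < v := F.par_lt v hv1 he
      have hv'ev : v' ≤ F.ev v := F.child_le_ev ha hb (by omega) hc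
      -- claim 1 : F.ev v' = F.ev v
      have claim1 : F.ev v' = F.ev v := by
        refine le_antisymm (F.ev_nested hv1 (by omega) hv'ev) ?_
        by_contra hcon
        push_neg at hcon
        have hk0n : F.ev v' + 1 ≤ n := by omega
        have hv'lev : v' ≤ F.ev v' := F.le_ev hb
        have hpk0v : v ≤ F.par (F.ev v' + 1) := F.ev_par hvn (by omega) (by omega)
        have hpk0v' : F.par (F.ev v' + 1) < v' := F.ev_succ ha hb (by omega)
        rcases eq_or_lt_of_le hpk0v with hpe | hpl
        · have hmem : F.ev v' + 1 ∈ F.chSet v := by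
            simp only [chSet, Finset.mem_filter, Finset.mem_Icc]
            exact ⟨⟨by omega, hk0n⟩, hpe.symm⟩
          have := Finset.le_max' _ _ hmem
          rw [← hv'eq] at this
          omega
        · have := F.nested (F.ev v' + 1) v' (by omega) hk0n hpk0v' (by omega)
          omega
      -- claim 2 : G.ev v < v'
      have claim2 : G.ev v < v' := by
        by_contra hcon
        push_neg at hcon
        have hGnest : G.ev v' ≤ G.ev v := G.ev_nested hv1 (by omega) hcon
        have := hvmax v' ha hb (by omega) (by omega)
        omega
      have hF1v : (F.op v).ev v = v' - 1 := by
        rw [F.ev_op_self hcond, ← hv'eq]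
      have hle1 : ∀ i, 1 ≤ i → i ≤ n → G.ev i ≤ (F.op v).ev i := by
        intro i hi1 hi2
        by_cases hiv : i = v
        · subst hiv; rw [hF1v]; omega
        · rw [F.ev_op_ne v hi1 hi2 hiv]; exact hle i hi1 hi2
      have hsum1 : (∑ i ∈ Finset.Icc 1 n, ((F.op v).ev i - G.ev i)) ≤ d := by
        have hlt : (∑ i ∈ Finset.Icc 1 n, ((F.op v).ev i - G.ev i)) <
            (∑ i ∈ Finset.Icc 1 n, (F.ev i - G.ev i)) := by
          apply Finset.sum_lt_sum
          · intro i hi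
            rw [Finset.mem_Icc] at hi
            by_cases hiv : i = v
            · subst hiv; rw [hF1v]; omega
            · rw [F.ev_op_ne v hi.1 hi.2 hiv]
          · refine ⟨v, Finset.mem_Icc.mpr ⟨hv1, hvn⟩, ?_⟩
            rw [hF1v]
            omega
        omega
      have hle2 : G.le (F.op v) := ih (F.op v) hsum1 hle1
      exact Relation.ReflTransGen.head ⟨v, ⟨hv1, hvn, v + 1, by omega, by omega, hchild⟩,
        rfl⟩ hle2

lemma le_of_ev_le' {F G : OForest n} (h : ∀ i, 1 ≤ i → i ≤ n → G.ev i ≤ F.ev i) : G.le F :=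
  G.le_of_ev_le _ F (le_refl _) h

lemma chSet_op_eq (F : OForest n) {v j : ℕ} (hvj : v < j) :
    (F.op v).chSet j = F.chSet j := by
  by_cases h : 1 ≤ v ∧ (F.chSet v).Nonempty
  · rw [op_pos h]
    obtain ⟨v', hv'eq⟩ : ∃ v', v' = (F.chSet v).max' h.2 := ⟨_, rfl⟩
    obtain ⟨ha, hb, hc, hd, he⟩ := F.max'_facts h.1 h.2
    rw [← hv'eq] at ha hb hc hd
    have hpv : F.par v < v := F.par_lt v h.1 he
    ext k
    simp only [mem_chSet, mkOp_par, ← hv'eq]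
    by_cases hk : k = v'
    · rw [if_pos hk]
      constructor
      · rintro ⟨h1, h2⟩; omega
      · rintro ⟨h1, h2⟩; rw [hk] at h2; omega
    · rw [if_neg hk]
  · rw [op_eq_self h]

lemma op_op_ev (F : OForest n) {x i : ℕ} (hxi : x < i) (h1 : 1 ≤ x) (hi : i ≤ n) :
    ((F.op x).op i).ev i = (F.op i).ev i := by
  have hi1 : 1 ≤ i := by omega
  by_cases hc : 1 ≤ i ∧ (F.chSet i).Nonempty
  · have hc' : 1 ≤ i ∧ ((F.op x).chSet i).Nonempty :=
      ⟨hi1, by rw [F.chSet_op_eq hxi]; exact hc.2⟩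
    rw [(F.op x).ev_op_self hc', F.ev_op_self hc,
      max'_congr (F.chSet_op_eq hxi) hc'.2 hc.2]
  · have hc' : ¬(1 ≤ i ∧ ((F.op x).chSet i).Nonempty) := by
      rw [F.chSet_op_eq hxi]; exact hc
    rw [op_eq_self hc', op_eq_self hc]
    exact F.ev_op_ne x hi1 hi hxi.ne'

lemma foldl_ev : ∀ (l : List ℕ) (F : OForest n), l.Pairwise (· < ·) →
    (∀ x ∈ l, 1 ≤ x ∧ x ≤ n) → ∀ i, 1 ≤ i → i ≤ n →
    (l.foldl (fun A j => A.op j) F).ev i =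
      if i ∈ l then (F.op i).ev i else F.ev i := by
  intro l
  induction l with
  | nil => intro F _ _ i _ _; simp
  | cons x t ih =>
    intro F hp hm i hi1 hi2
    have hxlt : ∀ y ∈ t, x < y := (List.pairwise_cons.mp hp).1
    have hx := hm x (List.mem_cons_self (a := x) (l := t))
    have hIH := ih (F.op x) (List.pairwise_cons.mp hp).2
      (fun y hy => hm y (List.mem_cons_of_mem x hy)) i hi1 hi2
    simp only [List.foldl_cons] at *
    rw [hIH]
    by_cases hix : i = x
    · subst hix
      have hnotmem : i ∉ t := fun hh => absurd (hxlt i hh) (lt_irrefl i)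
      rw [if_neg hnotmem, if_pos (List.mem_cons_self (a := i) (l := t))]
    · by_cases hit : i ∈ t
      · rw [if_pos hit, if_pos (List.mem_cons_of_mem x hit),
          F.op_op_ev (hxlt i hit) hx.1 hi2]
      · have : i ∉ x :: t := by
          intro hh
          rcases List.mem_cons.mp hh with h | h
          · exact hix h
          · exact hit h
        rw [if_neg hit, if_neg this, F.ev_op_ne x hi1 hi2 hix]

end OForest

/-- For a forest `F` and vertices `i_1 < i_2 < ⋯ < i_m` of `F`, the meet
`F ∧ F[i_1] ∧ ⋯ ∧ F[i_m]` in the lattice `(F_ord(n), ≤)` equals the forest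
`(⋯((F[i_1])[i_2])⋯)[i_m]` obtained by operating on `i_1, …, i_m` successively.
Being the meet is expressed as being a greatest lower bound of
`{F} ∪ {F[i_1], …, F[i_m]}` with respect to `≤` (the meet of the lattice, which is unique
by antisymmetry). -/
theorem thm16 (n : ℕ) (F : OForest n) (l : List ℕ)
    (hsort : List.Chain' (· < ·) l) (hmem : ∀ x ∈ l, 1 ≤ x ∧ x ≤ n) :
    (l.foldl (fun A i => A.op i) F).le F ∧
    (∀ x ∈ l, (l.foldl (fun A i => A.op i) F).le (F.op x)) ∧
    (∀ z : OForest n, z.le F → (∀ x ∈ l, z.le (F.op x)) →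
      z.le (l.foldl (fun A i => A.op i) F)) := by
  have hp : l.Pairwise (· < ·) := List.isChain_iff_pairwise.mp hsort
  set A := l.foldl (fun A i => A.op i) F with hA
  have hAev : ∀ i, 1 ≤ i → i ≤ n →
      A.ev i = if i ∈ l then (F.op i).ev i else F.ev i :=
    fun i h1 h2 => OForest.foldl_ev l F hp hmem i h1 h2
  have hAF : ∀ i, 1 ≤ i → i ≤ n → A.ev i ≤ F.ev i := by
    intro i h1 h2
    rw [hAev i h1 h2]
    split
    · exact F.ev_op_le i h1 h2
    · exact le_refl _
  refine ⟨OForest.le_of_ev_le' hAF, ?_, ?_⟩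
  · intro x hx
    refine OForest.le_of_ev_le' ?_
    intro i h1 h2
    by_cases hix : i = x
    · subst hix
      rw [hAev i h1 h2, if_pos hx]
    · rw [F.ev_op_ne x h1 h2 hix]
      exact hAF i h1 h2
  · intro z hzF hzops
    refine OForest.le_of_ev_le' ?_
    intro i h1 h2
    rw [hAev i h1 h2]
    split
    · next hmem' => exact OForest.ev_mono_of_le (hzops i hmem') i h1 h2
    · exact OForest.ev_mono_of_le hzF i h1 h2

end
end

section
/- Let n ≥ 16 be an integer, and let A be an n-good two-rowed array whose n-summary has top row 1, a_{i_1}, a_{i_2}, …, a_{i_{l'}} (so the summary of the top row excluding the leading 1 has l' terms). Then (log n)/(log log n) − 3 ≤ l' ≤ 2(log n)/(log log n) + 2. -/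
open scoped Classical

noncomputable section

/-- Auxiliary recursion for the `n`-summary of a strictly decreasing list: given the
previously chosen term `cur` and the remaining terms `l`, the next chosen term is the
smallest member of `l` that is `≥ cur / log n` (the last term of the prefix of terms
`≥ cur / log n`, as `l` is decreasing); the process terminates when no such member exists. -/
def nsumAux (n : ℕ) : ℕ → ℕ → List ℕ → List ℕ
  | 0, _, _ => []
  | fuel + 1, cur, l =>
    let pred : ℕ → Bool := fun y => decide ((cur : ℝ) / Real.log n ≤ (y : ℝ))
    match (l.takeWhile pred).getLast? with
    | none => []
    | some y => y :: nsumAux n fuel y (l.dropWhile pred)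

/-- The `n`-summary of a (strictly decreasing) list of integers: the first term, and then
inductively the smallest member of the sequence that is `≥ (previous chosen term)/(log n)`,
terminating when no such member exists. -/
def nsummary (n : ℕ) (l : List ℕ) : List ℕ :=
  match l with
  | [] => []
  | x :: xs => x :: nsumAux n xs.length x xs

/-- A two-rowed array `[a_1 … a_l ; b_1 … b_l]`, encoded as a list of columns, is
`n`-childlike if all entries lie in `[n]`, `a_1 = 1`, `n ≥ a_2 > a_3 > ⋯ > a_l = 2`, and
`b_1 > b_2 ≥ b_3 ≥ ⋯ ≥ b_l`. -/
def NChildlike (n : ℕ) (A : List (ℕ × ℕ)) : Prop :=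
  (∀ c ∈ A, 1 ≤ c.1 ∧ c.1 ≤ n ∧ 1 ≤ c.2 ∧ c.2 ≤ n) ∧
  A.head?.map Prod.fst = some 1 ∧
  A.tail ≠ [] ∧
  List.Chain' (fun x y => y < x) (A.tail.map Prod.fst) ∧
  (A.tail.map Prod.fst).getLast? = some 2 ∧
  List.Chain' (fun x y => y ≤ x) (A.map Prod.snd) ∧
  (∀ b1 ∈ A.head?.map Prod.snd, ∀ b2 ∈ (A.tail.head?).map Prod.snd, b2 < b1)

/-- An array is `n`-good if it is `n`-childlike and the `n`-summary `a_{i_1}, …, a_{i_{l'}}`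
of its top row (excluding the leading `1`) satisfies `a_{i_1} ≥ n / log n` and
`a_{i_{l'}} ≤ (log n)³`. -/
def NGood (n : ℕ) (A : List (ℕ × ℕ)) : Prop :=
  NChildlike n A ∧
  nsummary n (A.tail.map Prod.fst) ≠ [] ∧
  (∀ x ∈ (nsummary n (A.tail.map Prod.fst)).head?, (n : ℝ) / Real.log n ≤ (x : ℝ)) ∧
  (∀ x ∈ (nsummary n (A.tail.map Prod.fst)).getLast?, (x : ℝ) ≤ (Real.log n) ^ 3)

lemma nsumAux_succ (n fuel cur : ℕ) (l : List ℕ) :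
    nsumAux n (fuel+1) cur l =
      match (l.takeWhile (fun (a : ℕ) => decide ((cur : ℝ) / Real.log n ≤ (a : ℝ)))).getLast? with
      | none => []
      | some y => y :: nsumAux n fuel y
          (l.dropWhile (fun (a : ℕ) => decide ((cur : ℝ) / Real.log n ≤ (a : ℝ)))) := rfl


lemma nsumAux_eq_nil (n fuel cur : ℕ) (l : List ℕ)
    (h : (l.takeWhile (fun (a : ℕ) => decide ((cur : ℝ) / Real.log n ≤ (a : ℝ)))).getLast? = none) :
    nsumAux n (fuel+1) cur l = [] := by
  rw [nsumAux_succ, h]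

lemma nsumAux_eq_cons (n fuel cur : ℕ) (l : List ℕ) {y : ℕ}
    (h : (l.takeWhile (fun (a : ℕ) => decide ((cur : ℝ) / Real.log n ≤ (a : ℝ)))).getLast? = some y) :
    nsumAux n (fuel+1) cur l =
      y :: nsumAux n fuel y
        (l.dropWhile (fun (a : ℕ) => decide ((cur : ℝ) / Real.log n ≤ (a : ℝ)))) := by
  rw [nsumAux_succ, h]

lemma nsum_mem (n : ℕ) : ∀ (fuel cur : ℕ) (l : List ℕ),
    ∀ z ∈ nsumAux n fuel cur l, z ∈ l := by
  intro fuel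
  induction fuel with
  | zero => intro cur l z hz; simp [nsumAux] at hz
  | succ fuel ih =>
    intro cur l z hz
    set p : ℕ → Bool := fun (a : ℕ) => decide ((cur : ℝ) / Real.log n ≤ (a : ℝ)) with hp
    rcases h : (l.takeWhile p).getLast? with _ | y
    · rw [nsumAux_eq_nil n fuel cur l h] at hz; simp at hz
    · rw [nsumAux_eq_cons n fuel cur l h] at hz
      rcases List.mem_cons.1 hz with rfl | hz'
      · exact (List.takeWhile_sublist p).mem (List.mem_of_mem_getLast? (by rw [h]; rfl))
      · exact (List.dropWhile_sublist p).mem (ih y _ z hz')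

lemma mem_dropWhile_lt (c : ℝ) : ∀ (l : List ℕ),
    l.Pairwise (fun a b => b < a) →
    ∀ z ∈ l.dropWhile (fun (a : ℕ) => decide (c ≤ (a : ℝ))), (z : ℝ) < c := by
  intro l
  induction l with
  | nil => intro _ z hz; simp at hz
  | cons x xs ih =>
    intro hpw z hz
    obtain ⟨hx, hxs⟩ := List.pairwise_cons.1 hpw
    by_cases hc : c ≤ (x : ℝ)
    · rw [List.dropWhile_cons_of_pos (by simpa using hc)] at hz
      exact ih hxs z hz
    · rw [List.dropWhile_cons_of_neg (by simpa using hc)] at hz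
      push_neg at hc
      rcases List.mem_cons.1 hz with rfl | hz'
      · exact hc
      · calc (z : ℝ) < x := by exact_mod_cast hx z hz'
          _ < c := hc

lemma lowerAux (n : ℕ) (hL : 0 < Real.log n) :
    ∀ (fuel cur : ℕ) (l : List ℕ),
      ∀ z ∈ (nsumAux n fuel cur l).getLast?,
        (cur : ℝ) / Real.log n ^ (nsumAux n fuel cur l).length ≤ (z : ℝ) := by
  intro fuel
  induction fuel with
  | zero => intro cur l z hz; simp [nsumAux] at hz
  | succ fuel ih =>
    intro cur l z hz
    set p : ℕ → Bool := fun (a : ℕ) => decide ((cur : ℝ) / Real.log n ≤ (a : ℝ)) with hp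
    rcases h : (l.takeWhile p).getLast? with _ | y
    · rw [nsumAux_eq_nil n fuel cur l h] at hz; simp at hz
    · rw [nsumAux_eq_cons n fuel cur l h] at hz ⊢
      rw [← hp] at hz ⊢
      have hytw : y ∈ l.takeWhile p := List.mem_of_mem_getLast? (l := l.takeWhile p) (by rw [h]; rfl)
      have hy : (cur : ℝ) / Real.log n ≤ (y : ℝ) := by
        have := List.mem_takeWhile_imp hytw
        simpa [hp] using this
      rcases hr : nsumAux n fuel y (l.dropWhile p) with _ | ⟨w, ws⟩
      · rw [hr] at hz
        simp only [List.getLast?_singleton, Option.mem_def, Option.some.injEq] at hz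
        subst hz
        simpa using hy
      · rw [hr] at hz
        rw [List.getLast?_cons_cons] at hz
        have h2 := ih y (l.dropWhile p) z (by rw [hr]; exact hz)
        rw [hr] at h2
        have hlen : (y :: w :: ws).length = (w :: ws).length + 1 := rfl
        rw [hlen, pow_succ, ← div_div]
        calc (cur : ℝ) / Real.log n ^ (w :: ws).length / Real.log n
            = ((cur : ℝ) / Real.log n) / Real.log n ^ (w :: ws).length := by
              rw [div_div, div_div, mul_comm]
          _ ≤ (y : ℝ) / Real.log n ^ (w :: ws).length :=
              div_le_div_of_nonneg_right hy (pow_pos hL _).le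
          _ ≤ (z : ℝ) := h2

lemma upperAux (n : ℕ) (hL : 1 ≤ Real.log n) :
    ∀ (fuel cur : ℕ) (l : List ℕ) (M : ℝ),
      l.Pairwise (fun a b => b < a) → (∀ a ∈ l, (a : ℝ) ≤ M) → M ≤ (cur : ℝ) →
      ∀ z ∈ (nsumAux n fuel cur l).getLast?,
        (z : ℝ) * Real.log n ^ ((nsumAux n fuel cur l).length / 2) ≤ (cur : ℝ) ∧
        (z : ℝ) * Real.log n ^ (((nsumAux n fuel cur l).length - 1) / 2) ≤ M := by
  have hL0 : 0 < Real.log n := lt_of_lt_of_le one_pos hL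
  intro fuel
  induction fuel with
  | zero => intro cur l M _ _ _ z hz; simp [nsumAux] at hz
  | succ fuel ih =>
    intro cur l M hpw hub hMc z hz
    set p : ℕ → Bool := fun (a : ℕ) => decide ((cur : ℝ) / Real.log n ≤ (a : ℝ)) with hp
    rcases h : (l.takeWhile p).getLast? with _ | y
    · rw [nsumAux_eq_nil n fuel cur l h] at hz; simp at hz
    · rw [nsumAux_eq_cons n fuel cur l h] at hz ⊢
      rw [← hp] at hz ⊢
      have hytw : y ∈ l.takeWhile p := List.mem_of_mem_getLast? (l := l.takeWhile p) (by rw [h]; rfl)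
      have hymem : y ∈ l := (List.takeWhile_sublist p).mem hytw
      have hyM : (y : ℝ) ≤ M := hub y hymem
      have hyp : (cur : ℝ) / Real.log n ≤ (y : ℝ) := by
        have := List.mem_takeWhile_imp hytw
        simpa [hp] using this
      rcases hr : nsumAux n fuel y (l.dropWhile p) with _ | ⟨w, ws⟩
      · rw [hr] at hz
        simp only [List.getLast?_singleton, Option.mem_def, Option.some.injEq] at hz
        subst hz
        have h1 : (y : ℝ) ≤ (cur : ℝ) := hyM.trans hMc
        constructor
        · simpa using h1
        · simpa using hyM
      · rw [hr] at hz
        rw [List.getLast?_cons_cons] at hz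
        have ihres := ih y (l.dropWhile p) ((cur : ℝ) / Real.log n)
          (hpw.sublist (List.dropWhile_sublist p))
          (fun a ha => (mem_dropWhile_lt _ l hpw a ha).le)
          hyp z (by rw [hr]; exact hz)
        rw [hr] at ihres
        obtain ⟨ih1, ih2⟩ := ihres
        have hzpos : (0 : ℝ) ≤ (z : ℝ) := Nat.cast_nonneg z
        set mr := (w :: ws).length with hmr
        have hmr1 : 1 ≤ mr := by simp [hmr]
        have hlen : (y :: w :: ws).length = mr + 1 := rfl
        rw [hlen]
        constructor
        · have e1 : (mr + 1) / 2 = (mr - 1) / 2 + 1 := by omega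
          rw [e1, pow_succ, ← mul_assoc]
          calc (z : ℝ) * Real.log n ^ ((mr - 1) / 2) * Real.log n
              ≤ (cur : ℝ) / Real.log n * Real.log n :=
                mul_le_mul_of_nonneg_right ih2 hL0.le
            _ = (cur : ℝ) := div_mul_cancel₀ _ hL0.ne'
        · have e2 : (mr + 1 - 1) / 2 = mr / 2 := by omega
          rw [e2]
          exact ih1.trans hyM

lemma nsummary_last_lower (n : ℕ) (hL : 0 < Real.log n) (x : ℕ) (xs : List ℕ) :
    ∀ z ∈ (nsummary n (x :: xs)).getLast?,
      (x : ℝ) / Real.log n ^ ((nsummary n (x :: xs)).length - 1) ≤ (z : ℝ) := by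
  intro z hz
  rcases hr : nsumAux n xs.length x xs with _ | ⟨w, ws⟩ <;>
    simp only [nsummary, hr] at hz ⊢
  · simp only [List.getLast?_singleton, Option.mem_def, Option.some.injEq] at hz
    subst hz
    simp
  · rw [List.getLast?_cons_cons] at hz
    have := lowerAux n hL xs.length x xs z (by rw [hr]; exact hz)
    rw [hr] at this
    simpa using this

/-- For an `n`-good array with `n ≥ 16`, the number `l'` of terms of the `n`-summary of its
top row (excluding the leading `1`) satisfies
`log n / log log n - 3 ≤ l' ≤ 2 log n / log log n + 2`. -/
theorem thm17 (n : ℕ) (hn : 16 ≤ n) (A : List (ℕ × ℕ)) (hA : NGood n A) :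
    Real.log n / Real.log (Real.log n) - 3 ≤
        ((nsummary n (A.tail.map Prod.fst)).length : ℝ) ∧
      ((nsummary n (A.tail.map Prod.fst)).length : ℝ) ≤
        2 * Real.log n / Real.log (Real.log n) + 2 := by
  obtain ⟨⟨hbound, -, htne, hchain, -, -, -⟩, hne, hhead, hlast⟩ := hA
  have hn16 : (16 : ℝ) ≤ (n : ℝ) := by exact_mod_cast hn
  have hnpos : (0 : ℝ) < (n : ℝ) := by linarith
  have hL1 : 1 < Real.log n := by
    have h16 : 1 < Real.log 16 := (Real.lt_log_iff_exp_lt (by norm_num)).2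
      (lt_trans Real.exp_one_lt_d9 (by norm_num))
    exact lt_of_lt_of_le h16 (Real.log_le_log (by norm_num) hn16)
  have hL0 : 0 < Real.log n := lt_trans one_pos hL1
  have hlogL : 0 < Real.log (Real.log n) := Real.log_pos hL1
  rcases h0 : A.tail.map Prod.fst with _ | ⟨x, xs⟩
  · rw [h0] at hne; simp [nsummary] at hne
  · rw [h0] at hchain hne hhead hlast
    -- entries of the top row of the tail are between 1 and n
    have hent : ∀ a ∈ x :: xs, 1 ≤ a ∧ a ≤ n := by
      intro a ha
      rw [← h0] at ha
      obtain ⟨c, hc, rfl⟩ := List.mem_map.1 ha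
      have := hbound c (List.mem_of_mem_tail hc)
      exact ⟨this.1, this.2.1⟩
    have hxn : (x : ℝ) ≤ (n : ℝ) := by exact_mod_cast (hent x List.mem_cons_self).2
    have hxge : (n : ℝ) / Real.log n ≤ (x : ℝ) := hhead x (by simp [nsummary])
    -- pairwise
    haveI : IsTrans ℕ (fun a b => b < a) := ⟨fun a b c h1 h2 => lt_trans h2 h1⟩
    have hpw : (x :: xs).Pairwise (fun a b => b < a) := List.isChain_iff_pairwise.1 hchain
    obtain ⟨hxall, hpxs⟩ := List.pairwise_cons.1 hpw
    set l' := (nsummary n (x :: xs)).length with hl'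
    have hl'1 : 1 ≤ l' := by
      rcases hr : nsumAux n xs.length x xs with _ | _ <;> simp [hl', nsummary, hr]
    -- lower bound
    have hlow : Real.log n / Real.log (Real.log n) - 3 ≤ (l' : ℝ) := by
      have hSne : nsummary n (x :: xs) ≠ [] := hne
      obtain ⟨z, hz⟩ : ∃ z, (nsummary n (x :: xs)).getLast? = some z := by
        rcases hq : (nsummary n (x :: xs)).getLast? with _ | z
        · exact absurd (List.getLast?_eq_none_iff.1 hq) hSne
        · exact ⟨z, rfl⟩
      have h1 : (x : ℝ) / Real.log n ^ (l' - 1) ≤ (z : ℝ) :=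
        nsummary_last_lower n hL0 x xs z (by rw [hz]; rfl)
      have h2 : (z : ℝ) ≤ Real.log n ^ 3 := hlast z (by rw [hz]; rfl)
      have h3 : (n : ℝ) / Real.log n ^ l' ≤ Real.log n ^ 3 := by
        have e : Real.log n ^ l' = Real.log n ^ (l' - 1) * Real.log n := by
          have h : l' - 1 + 1 = l' := by omega
          rw [← pow_succ, h]
        calc (n : ℝ) / Real.log n ^ l'
            = ((n : ℝ) / Real.log n) / Real.log n ^ (l' - 1) := by
              rw [div_div, e, mul_comm]
          _ ≤ (x : ℝ) / Real.log n ^ (l' - 1) :=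
              div_le_div_of_nonneg_right hxge (pow_pos hL0 _).le
          _ ≤ (z : ℝ) := h1
          _ ≤ Real.log n ^ 3 := h2
      have h4 : (n : ℝ) ≤ Real.log n ^ (l' + 3) := by
        rw [div_le_iff₀ (pow_pos hL0 _)] at h3
        calc (n : ℝ) ≤ Real.log n ^ 3 * Real.log n ^ l' := h3
          _ = Real.log n ^ (l' + 3) := by rw [← pow_add]; ring_nf
      have h5 : Real.log n ≤ ((l' : ℝ) + 3) * Real.log (Real.log n) := by
        calc Real.log n ≤ Real.log (Real.log n ^ (l' + 3)) :=
            Real.log_le_log hnpos h4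
          _ = ((l' + 3 : ℕ) : ℝ) * Real.log (Real.log n) := Real.log_pow _ _
          _ = ((l' : ℝ) + 3) * Real.log (Real.log n) := by push_cast; ring
      have h6 : Real.log n / Real.log (Real.log n) ≤ (l' : ℝ) + 3 := by
        rw [div_le_iff₀ hlogL]; exact h5
      linarith
    refine ⟨hlow, ?_⟩
    -- upper bound
    rcases hr : nsumAux n xs.length x xs with _ | ⟨w, ws⟩
    · have : l' = 1 := by simp [hl', nsummary, hr]
      rw [this]
      have : 0 ≤ 2 * Real.log n / Real.log (Real.log n) :=
        div_nonneg (by linarith) hlogL.le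
      push_cast
      linarith
    · obtain ⟨z, hz⟩ : ∃ z, (w :: ws).getLast? = some z := by
        rcases hq : (w :: ws).getLast? with _ | z
        · exact absurd (List.getLast?_eq_none_iff.1 hq) (List.cons_ne_nil _ _)
        · exact ⟨z, rfl⟩
      have hup := upperAux n hL1.le xs.length x xs (x : ℝ) hpxs
        (fun a ha => by exact_mod_cast (hxall a ha).le) le_rfl z
        (by rw [hr, hz]; rfl)
      rw [hr] at hup
      have hz1 : (1 : ℝ) ≤ (z : ℝ) := by
        have hzxs : z ∈ xs := nsum_mem n xs.length x xs z (by rw [hr]; exact List.mem_of_mem_getLast? (by rw [hz]; rfl))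
        exact_mod_cast (hent z (List.mem_cons_of_mem _ hzxs)).1
      set m := (w :: ws).length with hm
      have h1 : Real.log n ^ (m / 2) ≤ (n : ℝ) := by
        calc Real.log n ^ (m / 2) = 1 * Real.log n ^ (m / 2) := (one_mul _).symm
          _ ≤ (z : ℝ) * Real.log n ^ (m / 2) :=
              mul_le_mul_of_nonneg_right hz1 (pow_pos hL0 _).le
          _ ≤ (x : ℝ) := hup.1
          _ ≤ (n : ℝ) := hxn
      have h2 : ((m / 2 : ℕ) : ℝ) * Real.log (Real.log n) ≤ Real.log n := by
        calc ((m / 2 : ℕ) : ℝ) * Real.log (Real.log n)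
            = Real.log (Real.log n ^ (m / 2)) := (Real.log_pow _ _).symm
          _ ≤ Real.log n := Real.log_le_log (pow_pos hL0 _) h1
      have h3 : ((m : ℝ) - 1) / 2 ≤ ((m / 2 : ℕ) : ℝ) := by
        have : m ≤ 2 * (m / 2) + 1 := by omega
        have : (m : ℝ) ≤ 2 * ((m / 2 : ℕ) : ℝ) + 1 := by exact_mod_cast this
        linarith
      have h4 : ((m : ℝ) - 1) / 2 * Real.log (Real.log n) ≤ Real.log n :=
        le_trans (mul_le_mul_of_nonneg_right h3 hlogL.le) h2
      have h5 : ((m : ℝ) - 1) / 2 ≤ Real.log n / Real.log (Real.log n) := by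
        rw [le_div_iff₀ hlogL]; exact h4
      have hlm : (l' : ℝ) = (m : ℝ) + 1 := by
        have : l' = m + 1 := by simp [hl', nsummary, hr, hm]
        exact_mod_cast this
      rw [hlm]
      rw [mul_div_assoc]
      linarith


end
end
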